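/- Let E be a finite-dimensional real inner product space, let x : ℝ → E be differentiable, let N be a positive natural number, let h : Fin N → E → ℝ be a family of continuously differentiable barrier functions, and let α : ℝ → ℝ be strictly monotone increasing, locally Lipschitz with α 0 = 0. Assume that for every index i, h i (x 0) ≥ 0 and for every t ≥ 0, fderiv ℝ (h i) (x t) (deriv x t) ≥ −α (h i (x t)). Then for every t ≥ 0 and every index i, h i (x t) ≥ 0; that is, the trajectory remains in the intersection of the safe sets C_i = {y : h i y ≥ 0}. -/

import Mathlib

/-- Forward invariance of the intersection of safe sets (property of the
intersected admissible control sets `K̄_j` of Definition 2 of the paper):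
if each barrier `h i` starts nonnegative and satisfies its CBF inequality
along the trajectory, then all safe sets `C_i = {y : h i y ≥ 0}` are
simultaneously forward invariant. -/
theorem cbf_intersection_forward_invariance
    {E : Type*} [NormedAddCommGroup E] [InnerProductSpace ℝ E]
    [FiniteDimensional ℝ E]
    (x : ℝ → E) (hx : Differentiable ℝ x)
    (N : ℕ) (hN : 0 < N)
    (h : Fin N → E → ℝ) (hh : ∀ i, ContDiff ℝ 1 (h i))
    (α : ℝ → ℝ) (hα : StrictMono α) (hα0 : α 0 = 0)
    (hαlip : LocallyLipschitz α)
    (h0 : ∀ i : Fin N, 0 ≤ h i (x 0))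
    (hineq : ∀ (i : Fin N) (t : ℝ), 0 ≤ t →
      -α (h i (x t)) ≤ fderiv ℝ (h i) (x t) (deriv x t)) :
    ∀ t : ℝ, 0 ≤ t → ∀ i : Fin N, 0 ≤ h i (x t) := by
  intro t ht i
  set y : ℝ → ℝ := fun s => h i (x s) with hy_def
  have hdiff : ∀ s : ℝ, HasDerivAt y (fderiv ℝ (h i) (x s) (deriv x s)) s := by
    intro s
    exact (((hh i).differentiable one_ne_zero) (x s)).hasFDerivAt.comp_hasDerivAt s
      (hx s).hasDerivAt
  have hycont : Continuous y :=
    ((hh i).continuous.comp hx.continuous)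
  by_contra hneg
  push_neg at hneg
  -- the set of times in [0,t] where y is nonnegative
  set S : Set ℝ := Set.Icc 0 t ∩ y ⁻¹' Set.Ici 0 with hS_def
  have hSclosed : IsClosed S :=
    isClosed_Icc.inter (isClosed_Ici.preimage hycont)
  have h0S : (0 : ℝ) ∈ S := ⟨⟨le_rfl, ht⟩, h0 i⟩
  have hSne : S.Nonempty := ⟨0, h0S⟩
  have hSbdd : BddAbove S := ⟨t, fun s hs => hs.1.2⟩
  set t₀ : ℝ := sSup S with ht₀_def
  have ht₀S : t₀ ∈ S := hSclosed.csSup_mem hSne hSbdd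
  have ht₀0 : 0 ≤ t₀ := ht₀S.1.1
  have ht₀t : t₀ ≤ t := ht₀S.1.2
  have hyt₀ : 0 ≤ y t₀ := ht₀S.2
  have ht₀lt : t₀ < t := by
    rcases lt_or_eq_of_le ht₀t with h' | h'
    · exact h'
    · exact absurd (h' ▸ hyt₀) (not_le.mpr hneg)
  -- on (t₀, t], y is negative
  have hyneg : ∀ s, t₀ < s → s ≤ t → y s < 0 := by
    intro s hs hst
    by_contra hge
    push_neg at hge
    have : s ∈ S := ⟨⟨ht₀0.trans hs.le, hst⟩, hge⟩
    exact absurd (le_csSup hSbdd this) (not_le.mpr hs)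
  -- hence deriv y > 0 on (t₀, t)
  have hderiv_pos : ∀ s ∈ interior (Set.Icc t₀ t), 0 < deriv y s := by
    intro s hs
    rw [interior_Icc] at hs
    have hs0 : 0 ≤ s := ht₀0.trans hs.1.le
    have hys : y s < 0 := hyneg s hs.1 hs.2.le
    have h1 : -α (y s) ≤ fderiv ℝ (h i) (x s) (deriv x s) := hineq i s hs0
    have h2 : α (y s) < 0 := hα0 ▸ hα hys
    rw [(hdiff s).deriv]
    linarith
  have hmono : StrictMonoOn y (Set.Icc t₀ t) :=
    strictMonoOn_of_deriv_pos (convex_Icc t₀ t) hycont.continuousOn hderiv_pos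
  have := hmono ⟨le_rfl, ht₀t⟩ ⟨ht₀t, le_rfl⟩ ht₀lt
  linarith
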